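/- Let K : ℝ⁺×ℝ⁺ → [0,∞) be a function depending only on the dyadic distance (i.e. δ(x,y) = δ(x',y') implies K(x,y) = K(x',y')) and suppose ∫_{ℝ⁺} K(x₀,y) dy = 1 for some x₀ ∈ ℝ⁺. Then there exist k_j ≥ 0 (j ∈ ℤ) such that K(x,y) = k_j whenever δ(x,y) = 2^j, the series Σ_{j∈ℤ} k_j 2^{j−1} converges to 1, and K is a symmetric Markov kernel: K(x,y) = K(y,x) and ∫_{ℝ⁺} K(x,y) dy = 1 for every x ∈ ℝ⁺. -/

import Mathlib

open MeasureTheory Set Filter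

/-- The dyadic distance on ℝ⁺: the infimum of the lengths of the dyadic
intervals `[k·2^{-j}, (k+1)·2^{-j})` containing both points (and `0` on the diagonal). -/
noncomputable def dyadicDist (x y : ℝ) : ℝ :=
  if x = y then 0
  else sInf {r : ℝ | ∃ (j : ℤ) (k : ℕ), r = (2:ℝ) ^ (-j) ∧
    x ∈ Set.Ico ((k : ℝ) * (2:ℝ) ^ (-j)) (((k : ℝ) + 1) * (2:ℝ) ^ (-j)) ∧
    y ∈ Set.Ico ((k : ℝ) * (2:ℝ) ^ (-j)) (((k : ℝ) + 1) * (2:ℝ) ^ (-j))}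

namespace DyadicAux

lemma two_zpow_pos (j : ℤ) : (0:ℝ) < 2 ^ j := zpow_pos (by norm_num) j

lemma floor_half (a : ℝ) : ⌊a / 2⌋ = ⌊a⌋ / 2 := by
  have key : 2 * (⌊a⌋ / 2) ≤ ⌊a⌋ ∧ ⌊a⌋ + 1 ≤ 2 * (⌊a⌋ / 2) + 2 := by omega
  have h1 := Int.floor_le a
  have h2 := Int.lt_floor_add_one a
  rw [Int.floor_eq_iff]
  constructor
  · have : ((2 * (⌊a⌋ / 2) : ℤ) : ℝ) ≤ (⌊a⌋ : ℝ) := by exact_mod_cast key.1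
    push_cast at this ⊢
    linarith
  · have : ((⌊a⌋ + 1 : ℤ) : ℝ) ≤ ((2 * (⌊a⌋ / 2) + 2 : ℤ) : ℝ) := by exact_mod_cast key.2
    push_cast at this ⊢
    linarith

/-- The dyadic interval of length `2^j` containing `x`. -/
noncomputable def D (j : ℤ) (x : ℝ) : Set ℝ :=
  Set.Ico ((⌊x / (2:ℝ)^j⌋ : ℝ) * (2:ℝ)^j) (((⌊x / (2:ℝ)^j⌋ : ℝ) + 1) * (2:ℝ)^j)

lemma mem_D_iff {j : ℤ} {x y : ℝ} : y ∈ D j x ↔ ⌊y / (2:ℝ)^j⌋ = ⌊x / (2:ℝ)^j⌋ := by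
  have hc := two_zpow_pos j
  constructor
  · rintro ⟨h1, h2⟩
    rw [Int.floor_eq_iff]
    exact ⟨(le_div_iff₀ hc).2 h1, by exact (div_lt_iff₀ hc).2 h2⟩
  · intro h
    obtain ⟨h1, h2⟩ := Int.floor_eq_iff.1 h
    exact ⟨(le_div_iff₀ hc).1 h1, (div_lt_iff₀ hc).1 h2⟩

lemma self_mem_D (j : ℤ) (x : ℝ) : x ∈ D j x := mem_D_iff.2 rfl

lemma D_succ_subset (j : ℤ) (x : ℝ) : D j x ⊆ D (j + 1) x := by
  intro y hy
  rw [mem_D_iff] at hy ⊢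
  have e : ∀ z : ℝ, z / (2:ℝ)^(j+1) = (z / 2^j) / 2 := by
    intro z
    rw [zpow_add_one₀ (two_ne_zero)]
    ring
  rw [e, e, floor_half, floor_half, hy]

lemma D_mono {j j' : ℤ} (h : j ≤ j') (x : ℝ) : D j x ⊆ D j' x := by
  exact Int.le_induction (motive := fun n _ => D j x ⊆ D n x) subset_rfl
    (fun n _ ih => ih.trans (D_succ_subset n x)) j' h

lemma D_subset_Ici {j : ℤ} {x : ℝ} (hx : 0 ≤ x) : D j x ⊆ Ici 0 := by
  intro y hy
  have hc := two_zpow_pos j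
  have hf : (0:ℤ) ≤ ⌊x / 2^j⌋ := Int.floor_nonneg.2 (div_nonneg hx hc.le)
  have h0 : (0:ℝ) ≤ (⌊x / (2:ℝ)^j⌋ : ℝ) * 2^j :=
    mul_nonneg (by exact_mod_cast hf) hc.le
  exact le_trans h0 hy.1

lemma dist_lt_of_mem_D {j : ℤ} {x y : ℝ} (hy : y ∈ D j x) : |x - y| < 2^j := by
  obtain ⟨h1, h2⟩ := self_mem_D j x
  obtain ⟨h3, h4⟩ := hy
  rw [abs_sub_lt_iff]
  constructor <;> nlinarith [two_zpow_pos j]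

lemma exists_level {x y : ℝ} (hx : 0 ≤ x) (hy : 0 ≤ y) (hxy : x ≠ y) :
    ∃ m : ℤ, y ∈ D m x ∧ y ∉ D (m - 1) x ∧ dyadicDist x y = 2 ^ m := by
  classical
  -- nonempty
  obtain ⟨n, hn⟩ := pow_unbounded_of_one_lt (max x y) (one_lt_two (α := ℝ))
  have hmem : y ∈ D (n : ℤ) x := by
    rw [mem_D_iff]
    have hpow : (2:ℝ) ^ (n:ℤ) = 2 ^ n := zpow_natCast 2 n
    have hx' : ⌊x / (2:ℝ)^(n:ℤ)⌋ = 0 := by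
      rw [Int.floor_eq_zero_iff]
      refine ⟨div_nonneg hx (two_zpow_pos _).le, ?_⟩
      rw [div_lt_one (two_zpow_pos _), hpow]
      exact lt_of_le_of_lt (le_max_left x y) hn
    have hy' : ⌊y / (2:ℝ)^(n:ℤ)⌋ = 0 := by
      rw [Int.floor_eq_zero_iff]
      refine ⟨div_nonneg hy (two_zpow_pos _).le, ?_⟩
      rw [div_lt_one (two_zpow_pos _), hpow]
      exact lt_of_le_of_lt (le_max_right x y) hn
    rw [hx', hy']
  -- bounded below
  obtain ⟨n₂, hn₂⟩ := exists_pow_lt_of_lt_one (abs_pos.2 (sub_ne_zero.2 hxy))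
    (by norm_num : (1:ℝ)/2 < 1)
  have hbdd : ∀ m : ℤ, y ∈ D m x → -(n₂ : ℤ) ≤ m := by
    intro m hm
    have h1 : |x - y| < 2 ^ m := dist_lt_of_mem_D hm
    have h2 : (2:ℝ) ^ (-(n₂:ℤ)) = (1/2) ^ n₂ := by
      rw [zpow_neg, zpow_natCast, one_div, inv_pow]
    have : (2:ℝ) ^ (-(n₂:ℤ)) < 2 ^ m := by rw [h2]; linarith
    exact (zpow_lt_zpow_iff_right₀ (by norm_num : (1:ℝ) < 2)).1 this |>.le
  obtain ⟨m, hmP, hmin⟩ := Int.exists_least_of_bdd (P := fun m => y ∈ D m x)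
    ⟨-(n₂:ℤ), hbdd⟩ ⟨(n:ℤ), hmem⟩
  have hnotm : y ∉ D (m - 1) x := fun h => by have := hmin _ h; omega
  refine ⟨m, hmP, hnotm, ?_⟩
  -- compute the distance
  rw [dyadicDist, if_neg hxy]
  have hlb : ∀ r ∈ {r : ℝ | ∃ (j : ℤ) (k : ℕ), r = (2:ℝ) ^ (-j) ∧
      x ∈ Set.Ico ((k : ℝ) * (2:ℝ) ^ (-j)) (((k : ℝ) + 1) * (2:ℝ) ^ (-j)) ∧
      y ∈ Set.Ico ((k : ℝ) * (2:ℝ) ^ (-j)) (((k : ℝ) + 1) * (2:ℝ) ^ (-j))},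
      (2:ℝ) ^ m ≤ r := by
    rintro r ⟨j, k, rfl, hxI, hyI⟩
    have hc := two_zpow_pos (-j)
    have hk : ⌊x / (2:ℝ)^(-j)⌋ = (k : ℤ) := by
      rw [Int.floor_eq_iff]
      constructor
      · push_cast
        exact (le_div_iff₀ hc).2 hxI.1
      · push_cast
        exact (div_lt_iff₀ hc).2 hxI.2
    have hyD : y ∈ D (-j) x := by
      rw [D, hk]
      push_cast
      exact hyI
    exact zpow_le_zpow_right₀ (by norm_num) (hmin _ hyD)
  have hmemT : (2:ℝ) ^ m ∈ {r : ℝ | ∃ (j : ℤ) (k : ℕ), r = (2:ℝ) ^ (-j) ∧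
      x ∈ Set.Ico ((k : ℝ) * (2:ℝ) ^ (-j)) (((k : ℝ) + 1) * (2:ℝ) ^ (-j)) ∧
      y ∈ Set.Ico ((k : ℝ) * (2:ℝ) ^ (-j)) (((k : ℝ) + 1) * (2:ℝ) ^ (-j))} := by
    have hf : (0:ℤ) ≤ ⌊x / (2:ℝ)^m⌋ := Int.floor_nonneg.2 (div_nonneg hx (two_zpow_pos m).le)
    refine ⟨-m, ⌊x / (2:ℝ)^m⌋.toNat, by rw [neg_neg], ?_, ?_⟩
    · have := self_mem_D m x
      rw [neg_neg]
      rwa [show ((⌊x / (2:ℝ)^m⌋.toNat : ℕ) : ℝ) = (⌊x / (2:ℝ)^m⌋ : ℝ) by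
        exact_mod_cast Int.toNat_of_nonneg hf]
    · have := hmP
      rw [D] at this
      rw [neg_neg]
      rwa [show ((⌊x / (2:ℝ)^m⌋.toNat : ℕ) : ℝ) = (⌊x / (2:ℝ)^m⌋ : ℝ) by
        exact_mod_cast Int.toNat_of_nonneg hf]
  exact le_antisymm (csInf_le ⟨2^m, hlb⟩ hmemT) (le_csInf ⟨_, hmemT⟩ hlb)

lemma dist_eq_iff {x y : ℝ} (hx : 0 ≤ x) (hy : 0 ≤ y) (hxy : x ≠ y) (j : ℤ) :
    dyadicDist x y = 2 ^ j ↔ y ∈ D j x \ D (j - 1) x := by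
  obtain ⟨m, hm1, hm2, hm3⟩ := exists_level hx hy hxy
  have hinj : Function.Injective (fun n : ℤ => (2:ℝ) ^ n) :=
    (zpow_right_strictMono₀ (by norm_num : (1:ℝ) < 2)).injective
  constructor
  · intro h
    have hjm : j = m := hinj (show (2:ℝ)^j = (2:ℝ)^m by rw [← h, hm3])
    subst hjm
    exact ⟨hm1, hm2⟩
  · rintro ⟨h1, h2⟩
    have hjm : j = m := by
      by_contra hne
      rcases lt_or_gt_of_ne hne with hlt | hlt
      · exact hm2 (D_mono (by omega) x h1)
      · exact h2 (D_mono (by omega) x hm1)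
    rw [hjm]; exact hm3

/-- The level set at scale `2^j`. -/
noncomputable def A (j : ℤ) (x : ℝ) : Set ℝ := D j x \ D (j - 1) x

lemma measurableSet_D (j : ℤ) (x : ℝ) : MeasurableSet (D j x) := by
  rw [D]; exact measurableSet_Ico

lemma measurableSet_A (j : ℤ) (x : ℝ) : MeasurableSet (A j x) :=
  (measurableSet_D j x).diff (measurableSet_D (j-1) x)

lemma volume_D (j : ℤ) (x : ℝ) : volume (D j x) = ENNReal.ofReal ((2:ℝ)^j) := by
  rw [D, Real.volume_Ico]
  congr 1
  ring

lemma volume_A (j : ℤ) (x : ℝ) : volume (A j x) = ENNReal.ofReal ((2:ℝ)^(j-1)) := by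
  have hsub : D (j-1) x ⊆ D j x := D_mono (by omega) x
  have hfin : volume (D (j-1) x) ≠ ⊤ := by rw [volume_D]; exact ENNReal.ofReal_ne_top
  rw [A, measure_diff hsub (measurableSet_D (j-1) x).nullMeasurableSet hfin,
    volume_D, volume_D, ← ENNReal.ofReal_sub _ (two_zpow_pos _).le]
  congr 1
  have h : (2:ℝ)^j = 2 * 2^(j-1) := by
    rw [mul_comm, ← zpow_add_one₀ (two_ne_zero : (2:ℝ) ≠ 0)]
    congr 1
    omega
  linarith

lemma A_nonempty (j : ℤ) (x : ℝ) : (A j x).Nonempty :=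
  nonempty_of_measure_ne_zero (μ := volume)
    (by rw [volume_A]; exact (ENNReal.ofReal_pos.2 (two_zpow_pos _)).ne')

lemma mem_A_props {j : ℤ} {x y : ℝ} (hx : 0 ≤ x) (hyA : y ∈ A j x) :
    0 ≤ y ∧ dyadicDist x y = 2 ^ j := by
  have hy0 : (0:ℝ) ≤ y := D_subset_Ici hx hyA.1
  have hxy : x ≠ y := fun h => hyA.2 (by rw [← h]; exact self_mem_D (j-1) x)
  exact ⟨hy0, (dist_eq_iff hx hy0 hxy j).2 hyA⟩

lemma partition {x : ℝ} (hx : 0 ≤ x) : Ici 0 \ {x} = ⋃ j : ℤ, A j x := by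
  ext y
  constructor
  · rintro ⟨hy0, hyx⟩
    obtain ⟨m, h1, h2, _⟩ := exists_level hx hy0 (fun h => hyx (mem_singleton_iff.2 h.symm))
    exact mem_iUnion.2 ⟨m, h1, h2⟩
  · intro hy
    obtain ⟨m, hm⟩ := mem_iUnion.1 hy
    refine ⟨D_subset_Ici hx hm.1, fun he => ?_⟩
    rw [mem_singleton_iff] at he
    exact hm.2 (by rw [he]; exact self_mem_D (m-1) x)

lemma pairwise_disjoint_A (x : ℝ) : Pairwise (Function.onFun Disjoint (fun j => A j x)) := by
  have key : ∀ i j : ℤ, i < j → Disjoint (A i x) (A j x) := by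
    intro i j hij
    refine Set.disjoint_left.2 fun y hyi hyj => ?_
    exact hyj.2 (D_mono (by omega) x hyi.1)
  intro i j hij
  rcases hij.lt_or_gt with h | h
  · exact key _ _ h
  · exact (key _ _ h).symm

lemma dyadicDist_symm (x y : ℝ) : dyadicDist x y = dyadicDist y x := by
  unfold dyadicDist
  rcases eq_or_ne x y with h | h
  · rw [if_pos h, if_pos h.symm]
  · rw [if_neg h, if_neg h.symm]
    congr 1
    ext r
    constructor
    · rintro ⟨j, k, h1, h2, h3⟩; exact ⟨j, k, h1, h3, h2⟩
    · rintro ⟨j, k, h1, h2, h3⟩; exact ⟨j, k, h1, h3, h2⟩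

end DyadicAux

/-- Lemma 3 (1): a nonnegative kernel depending only on the dyadic distance and normalized at
one point is constant (`= k_j`) on each level set `{δ = 2^j}`, satisfies
`Σ_{j∈ℤ} k_j 2^{j-1} = 1`, and is a symmetric Markov kernel. -/
theorem kernel_of_dyadicDist_markov (K : ℝ → ℝ → ℝ)
    (hK0 : ∀ x y : ℝ, 0 ≤ x → 0 ≤ y → 0 ≤ K x y)
    (hKdist : ∀ x y x' y' : ℝ, 0 ≤ x → 0 ≤ y → 0 ≤ x' → 0 ≤ y' →
      dyadicDist x y = dyadicDist x' y' → K x y = K x' y')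
    (x₀ : ℝ) (hx₀ : 0 ≤ x₀)
    (hKnorm : (∫ y in Set.Ici (0:ℝ), K x₀ y) = 1) :
    ∃ k : ℤ → ℝ, (∀ j : ℤ, 0 ≤ k j) ∧
      (∀ (j : ℤ) (x y : ℝ), 0 ≤ x → 0 ≤ y → dyadicDist x y = (2:ℝ) ^ j → K x y = k j) ∧
      HasSum (fun j : ℤ => k j * (2:ℝ) ^ (j - 1)) 1 ∧
      (∀ x y : ℝ, 0 ≤ x → 0 ≤ y → K x y = K y x) ∧
      (∀ x : ℝ, 0 ≤ x → (∫ y in Set.Ici (0:ℝ), K x y) = 1) := by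
  classical
  open DyadicAux in
  have hyj : ∀ j : ℤ, (A j x₀).Nonempty := fun j => A_nonempty j x₀
  set k : ℤ → ℝ := fun j => K x₀ (hyj j).some with hk
  have hyprops : ∀ j : ℤ, 0 ≤ (hyj j).some ∧ dyadicDist x₀ (hyj j).some = 2 ^ j :=
    fun j => DyadicAux.mem_A_props hx₀ (hyj j).some_mem
  have hknonneg : ∀ j, 0 ≤ k j := fun j => hK0 _ _ hx₀ (hyprops j).1
  have hKlevel : ∀ (j : ℤ) (x y : ℝ), 0 ≤ x → 0 ≤ y → dyadicDist x y = (2:ℝ) ^ j →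
      K x y = k j := by
    intro j x y hx hy h
    exact hKdist x y x₀ _ hx hy hx₀ (hyprops j).1 (by rw [h, (hyprops j).2])
  -- lintegral computation
  have hT : ∀ x : ℝ, 0 ≤ x →
      (∫⁻ y in Set.Ici (0:ℝ), ENNReal.ofReal (K x y)) =
        ∑' j : ℤ, ENNReal.ofReal (k j) * ENNReal.ofReal ((2:ℝ)^(j-1)) := by
    intro x hx
    have hae : (Set.Ici (0:ℝ) : Set ℝ) =ᵐ[volume] (Set.Ici 0 \ {x} : Set ℝ) := by
      refine (MeasureTheory.diff_ae_eq_self.2 ?_).symm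
      exact measure_mono_null Set.inter_subset_right (measure_singleton x)
    rw [setLIntegral_congr hae, DyadicAux.partition hx,
      lintegral_iUnion (fun j => DyadicAux.measurableSet_A j x)
        (DyadicAux.pairwise_disjoint_A x)]
    refine tsum_congr fun j => ?_
    have hval : ∀ y ∈ DyadicAux.A j x,
        ENNReal.ofReal (K x y) = ENNReal.ofReal (k j) := fun y hy => by
      rw [hKlevel j x y hx (DyadicAux.mem_A_props hx hy).1 (DyadicAux.mem_A_props hx hy).2]
    rw [setLIntegral_congr_fun (DyadicAux.measurableSet_A j x) hval,
      setLIntegral_const, DyadicAux.volume_A]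
  -- a.e. strong measurability
  have hmeasF : ∀ x : ℝ, Measurable (fun y =>
      ∑' j : ℤ, (DyadicAux.A j x).indicator (fun _ => ENNReal.ofReal (k j)) y) :=
    fun x => Measurable.ennreal_tsum fun j =>
      measurable_const.indicator (DyadicAux.measurableSet_A j x)
  have hFval : ∀ x : ℝ, ∀ m : ℤ, ∀ y ∈ DyadicAux.A m x,
      (∑' j : ℤ, (DyadicAux.A j x).indicator (fun _ => ENNReal.ofReal (k j)) y)
        = ENNReal.ofReal (k m) := by
    intro x m y hy
    rw [tsum_eq_single m ?_]
    · exact Set.indicator_of_mem hy _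
    · intro j hj
      refine Set.indicator_of_notMem (fun hyj' => ?_) _
      exact (Set.disjoint_left.1 (DyadicAux.pairwise_disjoint_A x hj) hyj') hy
  have haesm : ∀ x : ℝ, 0 ≤ x →
      AEStronglyMeasurable (K x) (volume.restrict (Set.Ici 0)) := by
    intro x hx
    have hx0 : volume.restrict (Set.Ici (0:ℝ)) {x} = 0 := by
      rw [Measure.restrict_apply (measurableSet_singleton x)]
      exact measure_mono_null Set.inter_subset_left (measure_singleton x)
    have h0 : ∀ᵐ y ∂volume.restrict (Set.Ici (0:ℝ)), y ∈ Set.Ici (0:ℝ) :=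
      ae_restrict_mem measurableSet_Ici
    have h1 : ∀ᵐ y ∂volume.restrict (Set.Ici (0:ℝ)), y ≠ x := by
      rw [ae_iff]
      convert hx0 using 2
      ext y; simp
    refine AEStronglyMeasurable.congr
      ((hmeasF x).ennreal_toReal.aestronglyMeasurable) ?_
    filter_upwards [h0, h1] with y hy0 hyx
    have hyIn : y ∈ Set.Ici (0:ℝ) \ {x} := ⟨hy0, by simpa using hyx⟩
    rw [DyadicAux.partition hx] at hyIn
    obtain ⟨m, hm⟩ := Set.mem_iUnion.1 hyIn
    rw [hFval x m y hm, ENNReal.toReal_ofReal (hknonneg m),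
      hKlevel m x y hx (DyadicAux.mem_A_props hx hm).1 (DyadicAux.mem_A_props hx hm).2]
  -- Bochner integral identity
  have hint : ∀ x : ℝ, 0 ≤ x → (∫ y in Set.Ici (0:ℝ), K x y) =
      (∑' j : ℤ, ENNReal.ofReal (k j) * ENNReal.ofReal ((2:ℝ)^(j-1))).toReal := by
    intro x hx
    rw [integral_eq_lintegral_of_nonneg_ae
      ((ae_restrict_mem measurableSet_Ici).mono fun y hy => hK0 x y hx hy)
      (haesm x hx), hT x hx]
  set T := ∑' j : ℤ, ENNReal.ofReal (k j) * ENNReal.ofReal ((2:ℝ)^(j-1)) with hTdef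
  have hT1 : T.toReal = 1 := by rw [← hint x₀ hx₀]; exact hKnorm
  have hTne : T ≠ ⊤ := fun h => by rw [h] at hT1; simp at hT1
  have hfne : ∀ j : ℤ, ENNReal.ofReal (k j) * ENNReal.ofReal ((2:ℝ)^(j-1)) ≠ ⊤ :=
    fun j => ENNReal.mul_ne_top ENNReal.ofReal_ne_top ENNReal.ofReal_ne_top
  have hsummable : Summable
      (fun j : ℤ => (ENNReal.ofReal (k j) * ENNReal.ofReal ((2:ℝ)^(j-1))).toReal) :=
    ENNReal.summable_toReal hTne
  have htsumval :
      (∑' j : ℤ, (ENNReal.ofReal (k j) * ENNReal.ofReal ((2:ℝ)^(j-1))).toReal) = 1 := by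
    rw [← ENNReal.tsum_toReal_eq hfne]
    exact hT1
  have heq : (fun j : ℤ => (ENNReal.ofReal (k j) * ENNReal.ofReal ((2:ℝ)^(j-1))).toReal) =
      fun j : ℤ => k j * (2:ℝ)^(j-1) := by
    funext j
    rw [ENNReal.toReal_mul, ENNReal.toReal_ofReal (hknonneg j),
      ENNReal.toReal_ofReal (DyadicAux.two_zpow_pos _).le]
  refine ⟨k, hknonneg, hKlevel, ?_, ?_, ?_⟩
  · rw [← heq, ← htsumval]
    exact hsummable.hasSum
  · intro x y hx hy
    exact hKdist x y y x hx hy hy hx (DyadicAux.dyadicDist_symm x y)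
  · intro x hx
    rw [hint x hx, hT1]
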